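/- Gaussian expectation flow identity (equation (30) in the proof of Theorem 4.2): Let T > 0 and let v : [0,T] → [0,∞) be nondecreasing and continuous. Let F : [0,T] × ℝ → ℝ be bounded and continuous, and assume that the partial derivatives ∂_tF, ∂_xF and ∂_x²F exist, are continuous, and are bounded on [0,T] × ℝ. Then for all 0 ≤ s ≤ t ≤ T: ∫_ℝ F(t,x) d(gaussianReal 0 v(t))(x) − ∫_ℝ F(s,x) d(gaussianReal 0 v(s))(x) = ∫_s^t ( ∫_ℝ ∂_uF(u,x) d(gaussianReal 0 v(u))(x) ) du + (1/2) · ∫_{(s,t]} ( ∫_ℝ ∂_x²F(u,x) d(gaussianReal 0 v(u))(x) ) dμ_v(u). -/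

import Mathlib

open MeasureTheory ProbabilityTheory Real Set Filter Metric
open scoped ENNReal NNReal Topology

namespace GaussFlowAux

lemma pdf01 (z : ℝ) : gaussianPDFReal 0 1 z = (Real.sqrt (2 * π))⁻¹ * Real.exp (-z^2/2) := by
  simp [gaussianPDFReal]

lemma integral_gauss_one (φ : ℝ → ℝ) :
    ∫ z, φ z ∂(gaussianReal 0 1)
      = ∫ z, gaussianPDFReal 0 1 z * φ z := by
  rw [gaussianReal_of_var_ne_zero 0 one_ne_zero]
  have h : (gaussianPDF 0 1) = fun x => ((gaussianPDFReal 0 1 x).toNNReal : ℝ≥0∞) := by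
    funext x; simp [gaussianPDF, ENNReal.ofReal]
  rw [h, integral_withDensity_eq_integral_smul ((measurable_gaussianPDFReal 0 1).real_toNNReal)]
  congr 1; funext x
  simp [NNReal.smul_def, Real.coe_toNNReal _ (gaussianPDFReal_nonneg 0 1 x)]

lemma integrable_of_bdd {f : ℝ → ℝ} (hf : AEStronglyMeasurable f (gaussianReal 0 1))
    {K : ℝ} (hb : ∀ z, |f z| ≤ K) : Integrable f (gaussianReal 0 1) :=
  (integrable_const K).mono' hf (ae_of_all _ fun z => by simpa using hb z)

lemma integrable_abs_gauss : Integrable (fun z => |z|) (gaussianReal 0 1) := by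
  rw [gaussianReal_of_var_ne_zero 0 one_ne_zero]
  have h : (gaussianPDF 0 1) = fun x => ((gaussianPDFReal 0 1 x).toNNReal : ℝ≥0∞) := by
    funext x; simp [gaussianPDF, ENNReal.ofReal]
  rw [h, integrable_withDensity_iff_integrable_smul
    ((measurable_gaussianPDFReal 0 1).real_toNNReal)]
  have hint : Integrable (fun x : ℝ => (Real.sqrt (2 * π))⁻¹ * |x * Real.exp (-(1/2) * x^2)|) := by
    exact ((integrable_mul_exp_neg_mul_sq (by norm_num : (0:ℝ) < 1/2)).abs).const_mul _
  refine hint.mono' ?_ (ae_of_all _ fun x => ?_)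
  · exact ((measurable_gaussianPDFReal 0 1).real_toNNReal.coe_nnreal_real.mul
      measurable_abs).aestronglyMeasurable
  · simp only [NNReal.smul_def, Real.coe_toNNReal _ (gaussianPDFReal_nonneg 0 1 x)]
    rw [pdf01]
    rw [smul_eq_mul]
    have he : Real.exp (-x^2/2) = Real.exp (-(1/2) * x^2) := by ring_nf
    rw [he, Real.norm_eq_abs, abs_mul, abs_mul, abs_abs, abs_mul,
      abs_of_nonneg (Real.exp_nonneg _),
      abs_of_nonneg (by positivity : (0:ℝ) ≤ (Real.sqrt (2*π))⁻¹)]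
    ring_nf; exact le_refl _

lemma integral_scaled {a : ℝ} (ha : 0 ≤ a) {f : ℝ → ℝ} (hf : Continuous f) :
    ∫ x, f x ∂(gaussianReal 0 a.toNNReal)
      = ∫ z, f (Real.sqrt a * z) ∂(gaussianReal 0 1) := by
  have hmap : (gaussianReal 0 1).map (fun z => Real.sqrt a * z) = gaussianReal 0 a.toNNReal := by
    have := gaussianReal_map_const_mul (μ := 0) (v := 1) (Real.sqrt a)
    simp only [mul_zero] at this
    convert this using 3
    ext
    simp [Real.sq_sqrt ha, Real.coe_toNNReal _ ha]
  rw [← hmap, integral_map (by fun_prop) (hf.aestronglyMeasurable)]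


lemma slice_cont {T : ℝ} {g : ℝ → ℝ → ℝ}
    (hg : ContinuousOn (fun p : ℝ × ℝ => g p.1 p.2) (Set.Icc (0:ℝ) T ×ˢ Set.univ))
    {u : ℝ} (hu : u ∈ Set.Icc (0:ℝ) T) : Continuous (fun x => g u x) := by
  rw [← continuousOn_univ]
  exact hg.comp (Continuous.continuousOn (continuous_const.prodMk continuous_id))
    (fun x _ => ⟨hu, trivial⟩)

lemma cont_single {f : ℝ → ℝ} (hf : Continuous f) {M : ℝ} (hb : ∀ x, |f x| ≤ M) :
    Continuous (fun a => ∫ z, f (Real.sqrt a * z) ∂(gaussianReal 0 1)) := by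
  rw [continuous_iff_continuousAt]
  intro a
  apply continuousAt_of_dominated (bound := fun _ => M)
  · exact Eventually.of_forall fun q =>
      ((hf.comp (continuous_const.mul continuous_id)).aestronglyMeasurable)
  · exact Eventually.of_forall fun q => ae_of_all _ fun z => by
      simpa using hb _
  · exact integrable_const M
  · exact ae_of_all _ fun z => by
      exact (hf.comp ((Real.continuous_sqrt.mul continuous_const))).continuousAt

/-- Joint continuity of `(a, u) ↦ ∫ g u (√a z) dγ(z)` on `univ ×ˢ Icc 0 T`. -/
lemma cont_joint {T : ℝ} {g : ℝ → ℝ → ℝ}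
    (hg : ContinuousOn (fun p : ℝ × ℝ => g p.1 p.2) (Set.Icc (0:ℝ) T ×ˢ Set.univ))
    {M : ℝ} (hb : ∀ t ∈ Set.Icc (0:ℝ) T, ∀ x, |g t x| ≤ M) :
    ContinuousOn (fun p : ℝ × ℝ => ∫ z, g p.2 (Real.sqrt p.1 * z) ∂(gaussianReal 0 1))
      ((Set.univ : Set ℝ) ×ˢ Set.Icc (0:ℝ) T) := by
  intro p hp
  apply continuousWithinAt_of_dominated (bound := fun _ => M)
  · filter_upwards [eventually_mem_nhdsWithin] with q hq
    exact ((slice_cont hg hq.2).comp (continuous_const.mul continuous_id)).aestronglyMeasurable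
  · filter_upwards [eventually_mem_nhdsWithin] with q hq
    exact ae_of_all _ fun z => by simpa using hb _ hq.2 _
  · exact integrable_const M
  · refine ae_of_all _ fun z => ?_
    have hinner : ContinuousOn (fun q : ℝ × ℝ => (q.2, Real.sqrt q.1 * z))
        ((Set.univ : Set ℝ) ×ˢ Set.Icc (0:ℝ) T) :=
      Continuous.continuousOn (by fun_prop)
    exact (hg.comp hinner (fun q hq => ⟨hq.2, trivial⟩)) p hp


lemma tendsto_gauss_weight {l : Filter ℝ} (h : Tendsto (fun z : ℝ => |z|) l atTop) (K : ℝ) :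
    Tendsto (fun z : ℝ => K * Real.exp (-z^2/2)) l (𝓝 0) := by
  have h1 : Tendsto (fun z : ℝ => z^2) l atTop := by
    have := (tendsto_pow_atTop (two_ne_zero)).comp h
    refine this.congr fun z => by simp [sq_abs]
  have h2 : Tendsto (fun z : ℝ => -z^2/2) l atBot := by
    have := tendsto_neg_atTop_atBot.comp h1
    exact (this.atBot_div_const (by norm_num : (0:ℝ) < 2)).congr fun z => rfl
  have h3 := Real.tendsto_exp_atBot.comp h2
  have h4 := h3.const_mul K
  simpa using h4

lemma gaussian_ibp {g g' : ℝ → ℝ} (hg : ∀ z, HasDerivAt g (g' z) z)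
    (hg'c : Continuous g') {K K' : ℝ}
    (hgb : ∀ z, |g z| ≤ K) (hg'b : ∀ z, |g' z| ≤ K') :
    ∫ z, z * g z ∂(gaussianReal 0 1) = ∫ z, g' z ∂(gaussianReal 0 1) := by
  have hgc : Continuous g := continuous_iff_continuousAt.2 fun z => (hg z).continuousAt
  set e : ℝ → ℝ := fun z => Real.exp (-z^2/2) with he
  have hec : Continuous e := by fun_prop
  have hepos : ∀ z, 0 < e z := fun z => Real.exp_pos _
  have heq2 : ∀ z : ℝ, e z = Real.exp (-(1/2) * z^2) := fun z => by
    simp only [he]; ring_nf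
  set H : ℝ → ℝ := fun z => g z * e z with hH
  set H' : ℝ → ℝ := fun z => g' z * e z - z * g z * e z with hH'
  have hederiv : ∀ z, HasDerivAt e (e z * (-z)) z := by
    intro z
    have h1 : HasDerivAt (fun z : ℝ => -z^2/2) (-z) z := by
      have h0 := ((hasDerivAt_pow 2 z).neg.div_const 2)
      exact h0.congr_deriv (by norm_num; ring)
    exact (Real.hasDerivAt_exp _).comp z h1
  have hHd : ∀ z, HasDerivAt H (H' z) z := by
    intro z
    have h0 := (hg z).mul (hederiv z)
    exact h0.congr_deriv (by simp only [hH', he]; ring)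
  -- integrability of the two pieces and of H'
  have hint1 : Integrable (fun z => g' z * e z) := by
    refine ((integrable_exp_neg_mul_sq (by norm_num : (0:ℝ) < 1/2)).const_mul K').mono'
      ((hg'c.mul hec).aestronglyMeasurable) (ae_of_all _ fun z => ?_)
    rw [Real.norm_eq_abs, abs_mul, abs_of_nonneg (hepos z).le, heq2]
    exact mul_le_mul_of_nonneg_right (hg'b z) (Real.exp_nonneg _)
  have hint2 : Integrable (fun z => z * g z * e z) := by
    refine (((integrable_mul_exp_neg_mul_sq (by norm_num : (0:ℝ) < 1/2)).abs).const_mul K).mono'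
      (((continuous_id.mul hgc).mul hec).aestronglyMeasurable) (ae_of_all _ fun z => ?_)
    rw [Real.norm_eq_abs, abs_mul, abs_mul, abs_of_nonneg (hepos z).le, abs_mul,
      abs_of_nonneg (Real.exp_nonneg _), heq2]
    calc |z| * |g z| * Real.exp (-(1/2) * z^2)
        ≤ |z| * K * Real.exp (-(1/2) * z^2) :=
          mul_le_mul_of_nonneg_right (mul_le_mul_of_nonneg_left (hgb z) (abs_nonneg z))
            (Real.exp_nonneg _)
      _ = K * (|z| * Real.exp (-(1/2) * z^2)) := by ring
  have hintH' : Integrable H' := hint1.sub hint2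
  -- limits of H at ±∞
  have htop : Tendsto H atTop (𝓝 0) := by
    refine squeeze_zero_norm (fun z => ?_) (tendsto_gauss_weight tendsto_abs_atTop_atTop K)
    rw [Real.norm_eq_abs, hH]
    simp only []
    rw [abs_mul, abs_of_nonneg (hepos z).le]
    exact mul_le_mul_of_nonneg_right (hgb z) (hepos z).le
  have hbot : Tendsto H atBot (𝓝 0) := by
    refine squeeze_zero_norm (fun z => ?_) (tendsto_gauss_weight tendsto_abs_atBot_atTop K)
    rw [Real.norm_eq_abs, hH]
    simp only []
    rw [abs_mul, abs_of_nonneg (hepos z).le]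
    exact mul_le_mul_of_nonneg_right (hgb z) (hepos z).le
  -- FTC on the two half lines
  have hIoi : ∫ z in Ioi (0:ℝ), H' z = 0 - H 0 :=
    integral_Ioi_of_hasDerivAt_of_tendsto (hHd 0).continuousAt.continuousWithinAt
      (fun x _ => hHd x) hintH'.integrableOn htop
  have hIic : ∫ z in Iic (0:ℝ), H' z = H 0 - 0 :=
    integral_Iic_of_hasDerivAt_of_tendsto (hHd 0).continuousAt.continuousWithinAt
      (fun x _ => hHd x) hintH'.integrableOn hbot
  have htotal : ∫ z, H' z = 0 := by
    rw [← intervalIntegral.integral_Iic_add_Ioi hintH'.integrableOn hintH'.integrableOn, hIoi, hIic]; ring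
  have hkey : ∫ z, z * g z * e z = ∫ z, g' z * e z := by
    have := integral_sub hint1 hint2
    rw [hH'] at htotal
    rw [htotal] at this
    linarith [this]
  -- transfer to the gaussian measure
  have c0 : (0:ℝ) < Real.sqrt (2 * π) := Real.sqrt_pos.2 (by positivity)
  rw [integral_gauss_one (fun z => z * g z), integral_gauss_one g']
  have hpdf : ∀ z : ℝ, gaussianPDFReal 0 1 z = (Real.sqrt (2 * π))⁻¹ * e z := fun z => by
    simp [gaussianPDFReal, he]
  calc ∫ z, gaussianPDFReal 0 1 z * (z * g z)
      = ∫ z, (Real.sqrt (2 * π))⁻¹ * (z * g z * e z) := by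
        congr 1; funext z; rw [hpdf]; ring
    _ = (Real.sqrt (2 * π))⁻¹ * ∫ z, z * g z * e z := integral_const_mul _ _
    _ = (Real.sqrt (2 * π))⁻¹ * ∫ z, g' z * e z := by rw [hkey]
    _ = ∫ z, (Real.sqrt (2 * π))⁻¹ * (g' z * e z) := (integral_const_mul _ _).symm
    _ = ∫ z, gaussianPDFReal 0 1 z * g' z := by
        congr 1; funext z; rw [hpdf]; ring


lemma integral_bdd {f : ℝ → ℝ} {M : ℝ} (hb : ∀ z, |f z| ≤ M) :
    |∫ z, f z ∂(gaussianReal 0 1)| ≤ M := by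
  have h := norm_integral_le_of_norm_le_const (μ := gaussianReal 0 1) (f := f) (C := M)
    (ae_of_all _ fun z => by rw [Real.norm_eq_abs]; exact hb z)
  rw [Real.norm_eq_abs] at h
  simpa using h

lemma time_ftc {T : ℝ} {F Ft : ℝ → ℝ → ℝ} {M : ℝ}
    (hFt : ∀ t ∈ Set.Icc (0:ℝ) T, ∀ x,
      HasDerivWithinAt (fun u => F u x) (Ft t x) (Set.Icc 0 T) t)
    (hFc : ContinuousOn (fun p : ℝ × ℝ => F p.1 p.2) (Set.Icc (0:ℝ) T ×ˢ Set.univ))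
    (hFtc : ContinuousOn (fun p : ℝ × ℝ => Ft p.1 p.2) (Set.Icc (0:ℝ) T ×ˢ Set.univ))
    (hFb : ∀ t ∈ Set.Icc (0:ℝ) T, ∀ x, |F t x| ≤ M)
    (hFtb : ∀ t ∈ Set.Icc (0:ℝ) T, ∀ x, |Ft t x| ≤ M)
    (a : ℝ) {s t : ℝ} (hs : 0 ≤ s) (hst : s ≤ t) (ht : t ≤ T) :
    (∫ z, F t (Real.sqrt a * z) ∂(gaussianReal 0 1))
        - (∫ z, F s (Real.sqrt a * z) ∂(gaussianReal 0 1))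
      = ∫ u in s..t, ∫ z, Ft u (Real.sqrt a * z) ∂(gaussianReal 0 1) := by
  have hsub : Set.Icc s t ⊆ Set.Icc (0:ℝ) T := Set.Icc_subset_Icc hs ht
  have hcontk : ContinuousOn (fun u => ∫ z, F u (Real.sqrt a * z) ∂(gaussianReal 0 1))
      (Set.Icc s t) := by
    have h2 : ContinuousOn (fun u : ℝ => ((a, u) : ℝ × ℝ)) (Set.Icc s t) :=
      (Continuous.continuousOn (by fun_prop))
    exact (cont_joint hFc hFb).comp h2 (fun u hu => ⟨trivial, hsub hu⟩)
  have hcontΘ : ContinuousOn (fun u => ∫ z, Ft u (Real.sqrt a * z) ∂(gaussianReal 0 1))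
      (Set.Icc s t) := by
    have h2 : ContinuousOn (fun u : ℝ => ((a, u) : ℝ × ℝ)) (Set.Icc s t) :=
      (Continuous.continuousOn (by fun_prop))
    exact (cont_joint hFtc hFtb).comp h2 (fun u hu => ⟨trivial, hsub hu⟩)
  have hderiv : ∀ u ∈ Set.Ioo s t,
      HasDerivAt (fun u => ∫ z, F u (Real.sqrt a * z) ∂(gaussianReal 0 1))
        (∫ z, Ft u (Real.sqrt a * z) ∂(gaussianReal 0 1)) u := by
    intro u hu
    have hu0 : 0 < u := lt_of_le_of_lt hs hu.1
    have huT : u < T := lt_of_lt_of_le hu.2 ht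
    have hε : (0:ℝ) < min u (T - u) := lt_min hu0 (by linarith)
    have hmem : ∀ c ∈ ball u (min u (T - u)), c ∈ Set.Icc (0:ℝ) T := by
      intro c hc
      rw [mem_ball, Real.dist_eq, abs_lt] at hc
      constructor
      · have h3 : min u (T - u) ≤ u := min_le_left _ _
        linarith [hc.1]
      · have h3 : min u (T - u) ≤ T - u := min_le_right _ _
        linarith [hc.2]
    have key := hasDerivAt_integral_of_dominated_loc_of_deriv_le
      (F := fun c z => F c (Real.sqrt a * z))
      (F' := fun c z => Ft c (Real.sqrt a * z)) (x₀ := u)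
      (bound := fun _ => M) (μ := gaussianReal 0 1) (ball_mem_nhds u hε)
      ?_ ?_ ?_ ?_ (integrable_const M) ?_
    · exact key.2
    · filter_upwards [ball_mem_nhds u hε] with c hc
      exact ((slice_cont hFc (hmem c hc)).comp
        (continuous_const.mul continuous_id)).aestronglyMeasurable
    · exact integrable_of_bdd ((slice_cont hFc (hmem u (mem_ball_self hε))).comp
        (continuous_const.mul continuous_id)).aestronglyMeasurable
        (fun z => hFb _ (hmem u (mem_ball_self hε)) _)
    · exact ((slice_cont hFtc (hmem u (mem_ball_self hε))).comp
        (continuous_const.mul continuous_id)).aestronglyMeasurable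
    · exact ae_of_all _ fun z c hc => by
        simpa using hFtb _ (hmem c hc) _
    · refine ae_of_all _ fun z c hc => ?_
      have hcio : c ∈ Set.Ioo (0:ℝ) T := by
        rw [mem_ball, Real.dist_eq, abs_lt] at hc
        constructor
        · have h3 : min u (T - u) ≤ u := min_le_left _ _
          linarith [hc.1]
        · have h3 : min u (T - u) ≤ T - u := min_le_right _ _
          linarith [hc.2]
      exact (hFt c (Set.Ioo_subset_Icc_self hcio) _).hasDerivAt
        (Icc_mem_nhds hcio.1 hcio.2)
  have key := intervalIntegral.integral_eq_sub_of_hasDeriv_right_of_le hst hcontk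
    (fun u hu => (hderiv u hu).hasDerivWithinAt)
    ((hcontΘ.mono (by rw [Set.uIcc_of_le hst])).intervalIntegrable)
  rw [key]


section Heat

variable {f f' f'' : ℝ → ℝ} {M : ℝ}

lemma heat_deriv (hd1 : ∀ x, HasDerivAt f (f' x) x)
    (hd2 : ∀ x, HasDerivAt f' (f'' x) x) (hf''c : Continuous f'')
    (hb1 : ∀ x, |f x| ≤ M) (hb2 : ∀ x, |f' x| ≤ M) (hb3 : ∀ x, |f'' x| ≤ M)
    {a : ℝ} (ha : 0 < a) :
    HasDerivAt (fun c => ∫ z, f (Real.sqrt c * z) ∂(gaussianReal 0 1))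
      ((1/2) * ∫ z, f'' (Real.sqrt a * z) ∂(gaussianReal 0 1)) a := by
  have hfc : Continuous f := continuous_iff_continuousAt.2 fun z => (hd1 z).continuousAt
  have hf'c : Continuous f' := continuous_iff_continuousAt.2 fun z => (hd2 z).continuousAt
  have ha2 : (0:ℝ) < a/2 := by linarith
  have hsq2 : (0:ℝ) < Real.sqrt (a/2) := Real.sqrt_pos.2 ha2
  set F' : ℝ → ℝ → ℝ := fun c z => f' (Real.sqrt c * z) * (1/(2*Real.sqrt c) * z) with hF'
  have hball : ∀ c ∈ ball a (a/2), (0:ℝ) < c := by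
    intro c hc
    rw [mem_ball, Real.dist_eq, abs_lt] at hc
    linarith [hc.1]
  have key := hasDerivAt_integral_of_dominated_loc_of_deriv_le
    (F := fun c z => f (Real.sqrt c * z)) (F' := F') (x₀ := a)
    (bound := fun z => (M / (2 * Real.sqrt (a/2))) * |z|) (μ := gaussianReal 0 1)
    (ball_mem_nhds a (half_pos ha))
    (Eventually.of_forall fun c =>
      (hfc.comp (continuous_const.mul continuous_id)).aestronglyMeasurable)
    (integrable_of_bdd (hfc.comp (continuous_const.mul continuous_id)).aestronglyMeasurable
      (fun z => hb1 _))
    (((hf'c.comp (continuous_const.mul continuous_id)).mul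
      (continuous_const.mul continuous_id)).aestronglyMeasurable)
    (ae_of_all _ fun z c hc => ?_) ((integrable_abs_gauss.const_mul _)) 
    (ae_of_all _ fun z c hc => ?_)
  · -- conclude
    have hsa : (0:ℝ) < Real.sqrt a := Real.sqrt_pos.2 ha
    have h2 := key.2
    have heq : ∫ z, F' a z ∂(gaussianReal 0 1)
        = (1/2) * ∫ z, f'' (Real.sqrt a * z) ∂(gaussianReal 0 1) := by
      have e1 : ∫ z, F' a z ∂(gaussianReal 0 1)
          = (1/(2*Real.sqrt a)) * ∫ z, z * f' (Real.sqrt a * z) ∂(gaussianReal 0 1) := by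
        rw [← integral_const_mul]
        congr 1; funext z; simp only [hF']; ring
      have e2 : ∫ z, z * f' (Real.sqrt a * z) ∂(gaussianReal 0 1)
          = ∫ z, f'' (Real.sqrt a * z) * Real.sqrt a ∂(gaussianReal 0 1) := by
        refine gaussian_ibp (g := fun z => f' (Real.sqrt a * z))
          (g' := fun z => f'' (Real.sqrt a * z) * Real.sqrt a) (fun z => ?_)
          ((hf''c.comp (continuous_const.mul continuous_id)).mul continuous_const)
          (K := M) (K' := M * Real.sqrt a) (fun z => hb2 _) (fun z => ?_)
        · have h0 : HasDerivAt (fun z : ℝ => Real.sqrt a * z) (Real.sqrt a) z := by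
            simpa using (hasDerivAt_id z).const_mul (Real.sqrt a)
          exact (hd2 _).comp z h0
        · rw [abs_mul, abs_of_nonneg hsa.le]
          exact mul_le_mul_of_nonneg_right (hb3 _) hsa.le
      rw [e1, e2, integral_mul_const]
      field_simp
    rw [heq] at h2
    exact h2
  · -- bound
    have hc0 := hball c hc
    have hsc : Real.sqrt (a/2) ≤ Real.sqrt c := by
      apply Real.sqrt_le_sqrt
      rw [mem_ball, Real.dist_eq, abs_lt] at hc
      linarith [hc.1]
    have hscpos : (0:ℝ) < Real.sqrt c := lt_of_lt_of_le hsq2 hsc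
    rw [Real.norm_eq_abs, hF']
    simp only []
    rw [abs_mul, abs_mul, abs_of_nonneg (by positivity : (0:ℝ) ≤ 1/(2*Real.sqrt c))]
    calc |f' (Real.sqrt c * z)| * (1/(2*Real.sqrt c) * |z|)
        ≤ M * (1/(2*Real.sqrt c) * |z|) := by
          apply mul_le_mul_of_nonneg_right (hb2 _)
          positivity
      _ ≤ M / (2 * Real.sqrt (a/2)) * |z| := by
          have hM : (0:ℝ) ≤ M := (abs_nonneg _).trans (hb2 0)
          have e : M * (1/(2*Real.sqrt c) * |z|) = (M * |z|) / (2 * Real.sqrt c) := by ring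
          have e2 : M / (2 * Real.sqrt (a/2)) * |z| = (M * |z|) / (2 * Real.sqrt (a/2)) := by
            ring
          rw [e, e2]
          gcongr
          all_goals first
            | exact mul_nonneg hM (abs_nonneg _)
            | positivity
            | linarith
  · -- differentiability
    have hc0 := hball c hc
    have h0 : HasDerivAt (fun c : ℝ => Real.sqrt c * z) (1/(2*Real.sqrt c) * z) c :=
      (Real.hasDerivAt_sqrt (ne_of_gt hc0)).mul_const z
    exact (hd1 _).comp c h0

lemma heat_int (hd1 : ∀ x, HasDerivAt f (f' x) x)
    (hd2 : ∀ x, HasDerivAt f' (f'' x) x) (hf''c : Continuous f'')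
    (hb1 : ∀ x, |f x| ≤ M) (hb2 : ∀ x, |f' x| ≤ M) (hb3 : ∀ x, |f'' x| ≤ M)
    {b c : ℝ} (hb : 0 ≤ b) (hbc : b ≤ c) :
    (∫ z, f (Real.sqrt c * z) ∂(gaussianReal 0 1))
        - (∫ z, f (Real.sqrt b * z) ∂(gaussianReal 0 1))
      = ∫ a in b..c, (1/2) * ∫ z, f'' (Real.sqrt a * z) ∂(gaussianReal 0 1) := by
  have hfc : Continuous f := continuous_iff_continuousAt.2 fun z => (hd1 z).continuousAt
  have h := intervalIntegral.integral_eq_sub_of_hasDeriv_right_of_le hbc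
    (Continuous.continuousOn (cont_single hfc hb1))
    (fun x hx => (heat_deriv hd1 hd2 hf''c hb1 hb2 hb3
      (lt_of_le_of_lt hb hx.1)).hasDerivWithinAt)
    (Continuous.intervalIntegrable (continuous_const.mul (cont_single hf''c hb3)) _ _)
  rw [h]

end Heat


lemma sum_setIntegral_Ioc {μ : Measure ℝ} {f : ℝ → ℝ} {u : ℕ → ℝ} (hu : Monotone u)
    (n : ℕ) (hint : IntegrableOn f (Set.Ioc (u 0) (u n)) μ) :
    ∫ x in Set.Ioc (u 0) (u n), f x ∂μ
      = ∑ i ∈ Finset.range n, ∫ x in Set.Ioc (u i) (u (i+1)), f x ∂μ := by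
  induction n with
  | zero => simp
  | succ n ih =>
    have hsplit : Set.Ioc (u 0) (u (n+1)) = Set.Ioc (u 0) (u n) ∪ Set.Ioc (u n) (u (n+1)) :=
      (Set.Ioc_union_Ioc_eq_Ioc (hu (Nat.zero_le n)) (hu (Nat.le_succ n))).symm
    have h1 : IntegrableOn f (Set.Ioc (u 0) (u n)) μ :=
      hint.mono_set (by rw [hsplit]; exact Set.subset_union_left)
    have h2 : IntegrableOn f (Set.Ioc (u n) (u (n+1))) μ :=
      hint.mono_set (by rw [hsplit]; exact Set.subset_union_right)
    rw [Finset.sum_range_succ, ← ih h1, hsplit,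
      setIntegral_union (Set.Ioc_disjoint_Ioc_of_le le_rfl) measurableSet_Ioc h1 h2]

lemma eps_le_zero {D C : ℝ} (hC : 0 ≤ C) (h : ∀ ε : ℝ, 0 < ε → |D| ≤ ε * C) : D = 0 := by
  rcases eq_or_lt_of_le (abs_nonneg D) with h0 | h0
  · exact abs_eq_zero.1 h0.symm
  · exfalso
    have h1 := h (|D| / (2 * (C + 1))) (by positivity)
    have h2 : |D| / (2 * (C + 1)) * C < |D| := by
      rw [div_mul_eq_mul_div, div_lt_iff₀ (by positivity)]
      nlinarith
    linarith


end GaussFlowAux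

open GaussFlowAux

set_option maxHeartbeats 1000000

/-- Gaussian expectation flow identity.  For a nondecreasing,
nonnegative, continuous variance function `v` on `[0,T]` with Lebesgue–Stieltjes
measure `μ` (i.e. `μ((a,b]) = v(b) − v(a)`), and a bounded continuous
`F : [0,T] × ℝ → ℝ` with bounded continuous partial derivatives `∂_t F`,
`∂_x F`, `∂_x² F`, one has
`∫ F(t,·) dN(0,v(t)) − ∫ F(s,·) dN(0,v(s))
  = ∫_s^t (∫ ∂_u F(u,·) dN(0,v(u))) du
    + (1/2) ∫_{(s,t]} (∫ ∂_x² F(u,·) dN(0,v(u))) dμ(u)`. -/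
theorem gaussian_expectation_flow
    (T : ℝ) (hT : 0 < T)
    (v : ℝ → ℝ) (hv0 : ∀ t ∈ Set.Icc (0 : ℝ) T, 0 ≤ v t)
    (hvmono : MonotoneOn v (Set.Icc (0 : ℝ) T))
    (hvcont : ContinuousOn v (Set.Icc (0 : ℝ) T))
    (μ : Measure ℝ)
    (hμ : ∀ a b : ℝ, 0 ≤ a → a ≤ b → b ≤ T →
      μ (Set.Ioc a b) = ENNReal.ofReal (v b - v a))
    (F Ft Fx Fxx : ℝ → ℝ → ℝ)
    (hFt : ∀ t ∈ Set.Icc (0 : ℝ) T, ∀ x : ℝ,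
      HasDerivWithinAt (fun u => F u x) (Ft t x) (Set.Icc 0 T) t)
    (hFx : ∀ t ∈ Set.Icc (0 : ℝ) T, ∀ x : ℝ,
      HasDerivAt (fun y => F t y) (Fx t x) x)
    (hFxx : ∀ t ∈ Set.Icc (0 : ℝ) T, ∀ x : ℝ,
      HasDerivAt (fun y => Fx t y) (Fxx t x) x)
    (hFc : ContinuousOn (fun p : ℝ × ℝ => F p.1 p.2) (Set.Icc (0 : ℝ) T ×ˢ Set.univ))
    (hFtc : ContinuousOn (fun p : ℝ × ℝ => Ft p.1 p.2) (Set.Icc (0 : ℝ) T ×ˢ Set.univ))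
    (hFxc : ContinuousOn (fun p : ℝ × ℝ => Fx p.1 p.2) (Set.Icc (0 : ℝ) T ×ˢ Set.univ))
    (hFxxc : ContinuousOn (fun p : ℝ × ℝ => Fxx p.1 p.2) (Set.Icc (0 : ℝ) T ×ˢ Set.univ))
    (M : ℝ)
    (hbd : ∀ t ∈ Set.Icc (0 : ℝ) T, ∀ x : ℝ,
      |F t x| ≤ M ∧ |Ft t x| ≤ M ∧ |Fx t x| ≤ M ∧ |Fxx t x| ≤ M) :
    ∀ s t : ℝ, 0 ≤ s → s ≤ t → t ≤ T →
      (∫ x, F t x ∂(gaussianReal 0 (v t).toNNReal))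
          - (∫ x, F s x ∂(gaussianReal 0 (v s).toNNReal))
        = (∫ u in s..t, (∫ x, Ft u x ∂(gaussianReal 0 (v u).toNNReal)))
          + (1 / 2) * ∫ u in Set.Ioc s t,
              (∫ x, Fxx u x ∂(gaussianReal 0 (v u).toNNReal)) ∂μ := by
  intro s t hs hst ht
  have hbF : ∀ u ∈ Set.Icc (0:ℝ) T, ∀ x, |F u x| ≤ M := fun u hu x => (hbd u hu x).1
  have hbFt : ∀ u ∈ Set.Icc (0:ℝ) T, ∀ x, |Ft u x| ≤ M := fun u hu x => (hbd u hu x).2.1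
  have hbFx : ∀ u ∈ Set.Icc (0:ℝ) T, ∀ x, |Fx u x| ≤ M := fun u hu x => (hbd u hu x).2.2.1
  have hbFxx : ∀ u ∈ Set.Icc (0:ℝ) T, ∀ x, |Fxx u x| ≤ M := fun u hu x => (hbd u hu x).2.2.2
  have hsubI : Set.Icc s t ⊆ Set.Icc (0:ℝ) T := Set.Icc_subset_Icc hs ht
  have ht0 : (0:ℝ) ≤ t := hs.trans hst
  have htmem : t ∈ Set.Icc (0:ℝ) T := ⟨ht0, ht⟩
  have hsmem : s ∈ Set.Icc (0:ℝ) T := ⟨hs, hst.trans ht⟩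
  -- shorthands
  set γ : Measure ℝ := gaussianReal 0 1 with hγ
  set Φ : ℝ → ℝ → ℝ := fun a u => ∫ z, F u (Real.sqrt a * z) ∂γ with hΦ
  set Θ : ℝ → ℝ → ℝ := fun a u => ∫ z, Ft u (Real.sqrt a * z) ∂γ with hΘ
  set Ψ : ℝ → ℝ → ℝ := fun a u => ∫ z, Fxx u (Real.sqrt a * z) ∂γ with hΨ
  -- step 1 : rewrite the goal in terms of γ
  have e1 : ∫ x, F t x ∂(gaussianReal 0 (v t).toNNReal) = Φ (v t) t :=
    integral_scaled (hv0 t htmem) (slice_cont hFc htmem)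
  have e2 : ∫ x, F s x ∂(gaussianReal 0 (v s).toNNReal) = Φ (v s) s :=
    integral_scaled (hv0 s hsmem) (slice_cont hFc hsmem)
  have e3 : (∫ u in s..t, (∫ x, Ft u x ∂(gaussianReal 0 (v u).toNNReal)))
      = ∫ u in s..t, Θ (v u) u := by
    refine intervalIntegral.integral_congr fun u hu => ?_
    rw [Set.uIcc_of_le hst] at hu
    exact integral_scaled (hv0 u (hsubI hu)) (slice_cont hFtc (hsubI hu))
  have e4 : (∫ u in Set.Ioc s t, (∫ x, Fxx u x ∂(gaussianReal 0 (v u).toNNReal)) ∂μ)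
      = ∫ u in Set.Ioc s t, Ψ (v u) u ∂μ := by
    refine setIntegral_congr_fun measurableSet_Ioc fun u hu => ?_
    have hu' := hsubI (Set.Ioc_subset_Icc_self hu)
    exact integral_scaled (hv0 u hu') (slice_cont hFxxc hu')
  rw [e1, e2, e3, e4]
  -- continuity facts
  have hΦK : ContinuousOn (fun p : ℝ × ℝ => Φ p.1 p.2)
      ((Set.univ : Set ℝ) ×ˢ Set.Icc (0:ℝ) T) := cont_joint hFc hbF
  have hΘK : ContinuousOn (fun p : ℝ × ℝ => Θ p.1 p.2)
      ((Set.univ : Set ℝ) ×ˢ Set.Icc (0:ℝ) T) := cont_joint hFtc hbFt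
  have hΨK : ContinuousOn (fun p : ℝ × ℝ => Ψ p.1 p.2)
      ((Set.univ : Set ℝ) ×ˢ Set.Icc (0:ℝ) T) := cont_joint hFxxc hbFxx
  have hvmap : ContinuousOn (fun u : ℝ => ((v u, u) : ℝ × ℝ)) (Set.Icc s t) :=
    ContinuousOn.prodMk (hvcont.mono hsubI) continuousOn_id
  have hΘv : ContinuousOn (fun u => Θ (v u) u) (Set.Icc s t) :=
    hΘK.comp hvmap (fun u hu => ⟨trivial, hsubI hu⟩)
  have hΨv : ContinuousOn (fun u => Ψ (v u) u) (Set.Icc s t) :=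
    hΨK.comp hvmap (fun u hu => ⟨trivial, hsubI hu⟩)
  -- μ-integrability on Ioc s t
  have hμfin : μ (Set.Ioc s t) < ⊤ := by
    rw [hμ s t hs hst ht]; exact ENNReal.ofReal_lt_top
  have hμint : IntegrableOn (fun u => Ψ (v u) u) (Set.Ioc s t) μ := by
    haveI : IsFiniteMeasure (μ.restrict (Set.Ioc s t)) :=
      ⟨by rwa [Measure.restrict_apply_univ]⟩
    refine (integrable_const M).mono'
      ((hΨv.mono Set.Ioc_subset_Icc_self).aestronglyMeasurable measurableSet_Ioc) ?_
    filter_upwards [ae_restrict_mem measurableSet_Ioc] with u hu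
    rw [Real.norm_eq_abs]
    exact integral_bdd fun z => hbFxx u (hsubI (Set.Ioc_subset_Icc_self hu)) _
  -- reduce to the ε-estimate
  have hvst : v s ≤ v t := hvmono hsmem htmem hst
  have hmaingoal : Φ (v t) t - Φ (v s) s
      - ((∫ u in s..t, Θ (v u) u) + 1 / 2 * ∫ u in Set.Ioc s t, Ψ (v u) u ∂μ) = 0 → 
      Φ (v t) t - Φ (v s) s
        = (∫ u in s..t, Θ (v u) u) + 1 / 2 * ∫ u in Set.Ioc s t, Ψ (v u) u ∂μ := by
    intro h; linarith
  apply hmaingoal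
  refine eps_le_zero (C := (t - s) + (v t - v s)) (by linarith) fun ε hε => ?_
  -- uniform continuity setup
  have hTT : T ∈ Set.Icc (0:ℝ) T := ⟨hT.le, le_refl T⟩
  set C := v T with hCdef
  set K : Set (ℝ × ℝ) := Set.Icc (0:ℝ) C ×ˢ Set.Icc (0:ℝ) T with hK
  have hKcompact : IsCompact K := isCompact_Icc.prod isCompact_Icc
  have hKsub : K ⊆ (Set.univ : Set ℝ) ×ˢ Set.Icc (0:ℝ) T := fun q hq => ⟨trivial, hq.2⟩
  obtain ⟨δ₁, hδ₁, hUΘ⟩ := uniformContinuousOn_iff.1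
    (hKcompact.uniformContinuousOn_of_continuous (hΘK.mono hKsub)) ε hε
  obtain ⟨δ₂, hδ₂, hUΨ⟩ := uniformContinuousOn_iff.1
    (hKcompact.uniformContinuousOn_of_continuous (hΨK.mono hKsub)) ε hε
  set δ₃ := min δ₁ δ₂ with hδ₃def
  have hδ₃ : 0 < δ₃ := lt_min hδ₁ hδ₂
  obtain ⟨δᵥ, hδᵥ, hUv⟩ := uniformContinuousOn_iff.1
    (isCompact_Icc.uniformContinuousOn_of_continuous hvcont) δ₃ hδ₃
  set δ₀ := min δᵥ δ₃ with hδ₀def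
  have hδ₀ : 0 < δ₀ := lt_min hδᵥ hδ₃
  -- the partition
  set n : ℕ := ⌈(t - s) / δ₀⌉₊ + 1 with hn
  have hnpos : 0 < (n:ℝ) := by positivity
  have hmesh : (t - s) / n < δ₀ := by
    have hlown : (t - s) / δ₀ < n := lt_of_le_of_lt (Nat.le_ceil _)
      (by exact_mod_cast Nat.lt_succ_self _)
    rw [div_lt_iff₀ hnpos]
    have h2 := (div_lt_iff₀ hδ₀).1 hlown
    linarith [h2]
  have hmeshnn : 0 ≤ (t - s) / n := div_nonneg (by linarith) hnpos.le
  set p : ℕ → ℝ := fun i => s + i * ((t - s) / n) with hp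
  have hp0 : p 0 = s := by simp [hp]
  have hpn : p n = t := by
    simp only [hp]
    field_simp
    ring
  have hpmono : Monotone p := by
    intro i j hij
    simp only [hp]
    have h1 : (i:ℝ) ≤ j := Nat.cast_le.2 hij
    nlinarith [hmeshnn]
  have hpdiff : ∀ i : ℕ, p (i+1) - p i = (t - s) / n := fun i => by
    simp only [hp]; push_cast; ring
  have hpmem : ∀ i ≤ n, p i ∈ Set.Icc s t := by
    intro i hi
    constructor
    · simp only [hp]
      nlinarith [hmeshnn, Nat.cast_nonneg (α := ℝ) i]
    · calc p i ≤ p n := hpmono hi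
        _ = t := hpn
  -- sum decompositions
  have hGsum : Φ (v t) t - Φ (v s) s
      = ∑ i ∈ Finset.range n, (Φ (v (p (i+1))) (p (i+1)) - Φ (v (p i)) (p i)) := by
    rw [Finset.sum_range_sub (fun i => Φ (v (p i)) (p i)), hp0, hpn]
  have hΘiint : ∀ k, k < n →
      IntervalIntegrable (fun u => Θ (v u) u) volume (p k) (p (k+1)) := by
    intro k hk
    apply ContinuousOn.intervalIntegrable
    apply hΘv.mono
    rw [Set.uIcc_of_le (hpmono (Nat.le_succ k))]
    exact Set.Icc_subset_Icc (hpmem k hk.le).1 (hpmem (k+1) hk).2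
  have hΘsum : (∫ u in s..t, Θ (v u) u)
      = ∑ i ∈ Finset.range n, ∫ u in p i..p (i+1), Θ (v u) u := by
    have h0 := intervalIntegral.sum_integral_adjacent_intervals hΘiint
    rw [hp0, hpn] at h0
    exact h0.symm
  have hΨsum : (∫ u in Set.Ioc s t, Ψ (v u) u ∂μ)
      = ∑ i ∈ Finset.range n, ∫ u in Set.Ioc (p i) (p (i+1)), Ψ (v u) u ∂μ := by
    have h0 := sum_setIntegral_Ioc (μ := μ) (f := fun u => Ψ (v u) u) hpmono n
      (by rw [hp0, hpn]; exact hμint)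
    rwa [hp0, hpn] at h0
  -- per-interval estimate
  have hkey : ∀ i ∈ Finset.range n,
      |Φ (v (p (i+1))) (p (i+1)) - Φ (v (p i)) (p i)
        - ((∫ u in p i..p (i+1), Θ (v u) u)
           + 1 / 2 * ∫ u in Set.Ioc (p i) (p (i+1)), Ψ (v u) u ∂μ)|
        ≤ ε * (p (i+1) - p i) + ε * (v (p (i+1)) - v (p i)) := by
    intro i hi
    rw [Finset.mem_range] at hi
    have hpi := hpmem i hi.le
    have hpi1 := hpmem (i+1) hi
    have hple : p i ≤ p (i+1) := hpmono (Nat.le_succ i)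
    have hpiT := hsubI hpi
    have hpi1T := hsubI hpi1
    have hvle : v (p i) ≤ v (p (i+1)) := hvmono hpiT hpi1T hple
    have hvpi0 : 0 ≤ v (p i) := hv0 _ hpiT
    have hvpi1C : v (p (i+1)) ≤ C := hvmono hpi1T hTT hpi1T.2
    have hmesh_i : p (i+1) - p i < δ₀ := by rw [hpdiff]; exact hmesh
    have hΔv : v (p (i+1)) - v (p i) < δ₃ := by
      have hd := hUv (p (i+1)) hpi1T (p i) hpiT (by
        rw [Real.dist_eq, abs_of_nonneg (by linarith)]
        calc p (i+1) - p i < δ₀ := hmesh_i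
          _ ≤ δᵥ := min_le_left _ _)
      rwa [Real.dist_eq, abs_of_nonneg (by linarith)] at hd
    -- exact identities on the subinterval
    have t1 : Φ (v (p (i+1))) (p (i+1)) - Φ (v (p (i+1))) (p i)
        = ∫ u in p i..p (i+1), Θ (v (p (i+1))) u := by
      simp only [hΦ, hΘ]
      exact time_ftc hFt hFc hFtc hbF hbFt (v (p (i+1))) hpiT.1 hple hpi1T.2
    have t2 : Φ (v (p (i+1))) (p i) - Φ (v (p i)) (p i)
        = ∫ c in (v (p i))..(v (p (i+1))), (1/2) * Ψ c (p i) := by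
      simp only [hΦ, hΨ]
      exact heat_int (f := fun x => F (p i) x) (f' := fun x => Fx (p i) x)
        (f'' := fun x => Fxx (p i) x) (M := M)
        (fun x => hFx (p i) hpiT x) (fun x => hFxx (p i) hpiT x)
        (slice_cont hFxxc hpiT) (fun x => hbF _ hpiT x) (fun x => hbFx _ hpiT x)
        (fun x => hbFxx _ hpiT x) hvpi0 hvle
    -- error 1 : time integral with frozen variance vs moving variance
    have hint1 : IntervalIntegrable (fun u => Θ (v (p (i+1))) u) volume (p i) (p (i+1)) := by
      apply ContinuousOn.intervalIntegrable
      have h2 : ContinuousOn (fun u : ℝ => ((v (p (i+1)), u) : ℝ × ℝ))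
          (Set.uIcc (p i) (p (i+1))) := (Continuous.continuousOn (by fun_prop))
      have hsub2 : Set.uIcc (p i) (p (i+1)) ⊆ Set.Icc s t := by
        rw [Set.uIcc_of_le hple]; exact Set.Icc_subset_Icc hpi.1 hpi1.2
      exact hΘK.comp h2 (fun u hu => ⟨trivial, hsubI (hsub2 hu)⟩)
    have hE1 : |(∫ u in p i..p (i+1), Θ (v (p (i+1))) u)
        - ∫ u in p i..p (i+1), Θ (v u) u| ≤ ε * (p (i+1) - p i) := by
      rw [← intervalIntegral.integral_sub hint1 (hΘiint i hi)]
      have hb := intervalIntegral.norm_integral_le_of_norm_le_const (C := ε)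
        (f := fun u => Θ (v (p (i+1))) u - Θ (v u) u) (a := p i) (b := p (i+1)) ?_
      · rw [Real.norm_eq_abs] at hb
        have hba : |p (i+1) - p i| = p (i+1) - p i := abs_of_nonneg (by linarith)
        rw [hba] at hb
        exact hb
      · intro u hu
        rw [Set.uIoc_of_le hple] at hu
        have huI : u ∈ Set.Icc s t := ⟨hpi.1.trans hu.1.le, hu.2.trans hpi1.2⟩
        have huT := hsubI huI
        have hvu1 : v u ≤ v (p (i+1)) := hvmono huT hpi1T hu.2
        have hvu2 : v (p i) ≤ v u := hvmono hpiT huT hu.1.le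
        have hmem1 : ((v (p (i+1)), u) : ℝ × ℝ) ∈ K :=
          ⟨⟨by linarith, hvpi1C⟩, huT⟩
        have hmem2 : ((v u, u) : ℝ × ℝ) ∈ K :=
          ⟨⟨hv0 _ huT, hvmono huT hTT huT.2⟩, huT⟩
        have hdist : dist ((v (p (i+1)), u) : ℝ × ℝ) ((v u, u) : ℝ × ℝ) < δ₁ := by
          rw [Prod.dist_eq]
          apply max_lt
          · rw [Real.dist_eq, abs_of_nonneg (by linarith)]
            calc v (p (i+1)) - v u ≤ v (p (i+1)) - v (p i) := by linarith
              _ < δ₃ := hΔv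
              _ ≤ δ₁ := min_le_left _ _
          · rw [Real.dist_eq]
            simpa using hδ₁
        have hfin := hUΘ _ hmem1 _ hmem2 hdist
        rw [Real.dist_eq] at hfin
        rw [Real.norm_eq_abs]
        exact hfin.le
    -- error 2a : variance integral vs constant
    have hintc1 : IntervalIntegrable (fun c => Ψ c (p i)) volume (v (p i)) (v (p (i+1))) := by
      apply ContinuousOn.intervalIntegrable
      have h2 : ContinuousOn (fun c : ℝ => ((c, p i) : ℝ × ℝ))
          (Set.uIcc (v (p i)) (v (p (i+1)))) := (Continuous.continuousOn (by fun_prop))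
      exact hΨK.comp h2 (fun c hc => ⟨trivial, hpiT⟩)
    have hE2a : |(∫ c in (v (p i))..(v (p (i+1))), (1/2) * Ψ c (p i))
        - 1/2 * ((v (p (i+1)) - v (p i)) * Ψ (v (p i)) (p i))|
        ≤ 1/2 * (ε * (v (p (i+1)) - v (p i))) := by
      rw [intervalIntegral.integral_const_mul]
      have hPconst : (∫ _ in (v (p i))..(v (p (i+1))), Ψ (v (p i)) (p i))
          = (v (p (i+1)) - v (p i)) * Ψ (v (p i)) (p i) := by
        rw [intervalIntegral.integral_const, smul_eq_mul]
      have hcore : |(∫ c in (v (p i))..(v (p (i+1))), Ψ c (p i))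
          - (v (p (i+1)) - v (p i)) * Ψ (v (p i)) (p i)|
          ≤ ε * (v (p (i+1)) - v (p i)) := by
        rw [← hPconst, ← intervalIntegral.integral_sub hintc1
          (intervalIntegrable_const)]
        have hb := intervalIntegral.norm_integral_le_of_norm_le_const (C := ε)
          (f := fun c => Ψ c (p i) - Ψ (v (p i)) (p i))
          (a := v (p i)) (b := v (p (i+1))) ?_
        · rw [Real.norm_eq_abs] at hb
          have hba : |v (p (i+1)) - v (p i)| = v (p (i+1)) - v (p i) :=
            abs_of_nonneg (by linarith)
          rw [hba] at hb
          exact hb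
        · intro c hc
          rw [Set.uIoc_of_le hvle] at hc
          have hmem1 : ((c, p i) : ℝ × ℝ) ∈ K :=
            ⟨⟨by linarith [hc.1], hc.2.trans hvpi1C⟩, hpiT⟩
          have hmem2 : ((v (p i), p i) : ℝ × ℝ) ∈ K :=
            ⟨⟨hvpi0, le_trans hvle hvpi1C⟩, hpiT⟩
          have hdist : dist ((c, p i) : ℝ × ℝ) ((v (p i), p i) : ℝ × ℝ) < δ₂ := by
            rw [Prod.dist_eq]
            apply max_lt
            · rw [Real.dist_eq, abs_of_nonneg (by linarith [hc.1])]
              calc c - v (p i) ≤ v (p (i+1)) - v (p i) := by linarith [hc.2]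
                _ < δ₃ := hΔv
                _ ≤ δ₂ := min_le_right _ _
            · rw [Real.dist_eq]
              simpa using hδ₂
          have hfin := hUΨ _ hmem1 _ hmem2 hdist
          rw [Real.dist_eq] at hfin
          rw [Real.norm_eq_abs]
          exact hfin.le
      set A := ∫ c in (v (p i))..(v (p (i+1))), Ψ c (p i) with hA
      set B := (v (p (i+1)) - v (p i)) * Ψ (v (p i)) (p i) with hB
      have e5 : 1/2 * A - 1/2 * B = 1/2 * (A - B) := by ring
      rw [e5, abs_mul, abs_of_nonneg (by norm_num : (0:ℝ) ≤ 1/2)]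
      exact mul_le_mul_of_nonneg_left hcore (by norm_num)
    -- error 2b : μ-integral vs constant
    have hμi : μ (Set.Ioc (p i) (p (i+1))) = ENNReal.ofReal (v (p (i+1)) - v (p i)) :=
      hμ _ _ hpiT.1 hple hpi1T.2
    have hμifin : μ (Set.Ioc (p i) (p (i+1))) < ⊤ := by
      rw [hμi]; exact ENNReal.ofReal_lt_top
    have hE2b : |(∫ u in Set.Ioc (p i) (p (i+1)), Ψ (v u) u ∂μ)
        - (v (p (i+1)) - v (p i)) * Ψ (v (p i)) (p i)|
        ≤ ε * (v (p (i+1)) - v (p i)) := by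
      have hPb : (∫ _ in Set.Ioc (p i) (p (i+1)), Ψ (v (p i)) (p i) ∂μ)
          = (v (p (i+1)) - v (p i)) * Ψ (v (p i)) (p i) := by
        rw [setIntegral_const, measureReal_def, hμi, ENNReal.toReal_ofReal (by linarith), smul_eq_mul]
      have hμisub : IntegrableOn (fun u => Ψ (v u) u) (Set.Ioc (p i) (p (i+1))) μ :=
        hμint.mono_set (Set.Ioc_subset_Ioc hpi.1 hpi1.2)
      rw [← hPb, ← integral_sub hμisub
        (integrableOn_const hμifin.ne)]
      have hb := norm_setIntegral_le_of_norm_le_const (C := ε) hμifin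
        (f := fun u => Ψ (v u) u - Ψ (v (p i)) (p i)) ?_
      · rw [Real.norm_eq_abs] at hb
        calc |∫ u in Set.Ioc (p i) (p (i+1)), (Ψ (v u) u - Ψ (v (p i)) (p i)) ∂μ|
            ≤ ε * (μ (Set.Ioc (p i) (p (i+1)))).toReal := hb
          _ = ε * (v (p (i+1)) - v (p i)) := by
              rw [hμi, ENNReal.toReal_ofReal (by linarith)]
      · intro u hu
        have huI : u ∈ Set.Icc s t := ⟨hpi.1.trans hu.1.le, hu.2.trans hpi1.2⟩
        have huT := hsubI huI
        have hvu1 : v u ≤ v (p (i+1)) := hvmono huT hpi1T hu.2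
        have hvu2 : v (p i) ≤ v u := hvmono hpiT huT hu.1.le
        have hmem1 : ((v u, u) : ℝ × ℝ) ∈ K :=
          ⟨⟨hv0 _ huT, hvmono huT hTT huT.2⟩, huT⟩
        have hmem2 : ((v (p i), p i) : ℝ × ℝ) ∈ K :=
          ⟨⟨hvpi0, le_trans hvle hvpi1C⟩, hpiT⟩
        have hdist : dist ((v u, u) : ℝ × ℝ) ((v (p i), p i) : ℝ × ℝ) < δ₂ := by
          rw [Prod.dist_eq]
          apply max_lt
          · rw [Real.dist_eq, abs_of_nonneg (by linarith)]
            calc v u - v (p i) ≤ v (p (i+1)) - v (p i) := by linarith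
              _ < δ₃ := hΔv
              _ ≤ δ₂ := min_le_right _ _
          · rw [Real.dist_eq, abs_of_nonneg (by linarith [hu.1.le])]
            calc u - p i ≤ p (i+1) - p i := by linarith [hu.2]
              _ < δ₀ := hmesh_i
              _ ≤ δ₃ := min_le_right _ _
              _ ≤ δ₂ := min_le_right _ _
        have hfin := hUΨ _ hmem1 _ hmem2 hdist
        rw [Real.dist_eq] at hfin
        rw [Real.norm_eq_abs]
        exact hfin.le
    -- combine the three errors
    have hsplit : Φ (v (p (i+1))) (p (i+1)) - Φ (v (p i)) (p i)
        - ((∫ u in p i..p (i+1), Θ (v u) u)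
           + 1 / 2 * ∫ u in Set.Ioc (p i) (p (i+1)), Ψ (v u) u ∂μ)
        = ((∫ u in p i..p (i+1), Θ (v (p (i+1))) u)
            - ∫ u in p i..p (i+1), Θ (v u) u)
          + (((∫ c in (v (p i))..(v (p (i+1))), (1/2) * Ψ c (p i))
               - 1/2 * ((v (p (i+1)) - v (p i)) * Ψ (v (p i)) (p i)))
             - 1/2 * ((∫ u in Set.Ioc (p i) (p (i+1)), Ψ (v u) u ∂μ)
               - (v (p (i+1)) - v (p i)) * Ψ (v (p i)) (p i))) := by
      linarith [t1, t2]
    have habs : |((∫ c in (v (p i))..(v (p (i+1))), (1/2) * Ψ c (p i))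
         - 1/2 * ((v (p (i+1)) - v (p i)) * Ψ (v (p i)) (p i)))
       - 1/2 * ((∫ u in Set.Ioc (p i) (p (i+1)), Ψ (v u) u ∂μ)
         - (v (p (i+1)) - v (p i)) * Ψ (v (p i)) (p i))|
        ≤ 1/2 * (ε * (v (p (i+1)) - v (p i)))
          + 1/2 * (ε * (v (p (i+1)) - v (p i))) := by
      refine le_trans (abs_sub _ _) ?_
      have h3 : |1/2 * ((∫ u in Set.Ioc (p i) (p (i+1)), Ψ (v u) u ∂μ)
         - (v (p (i+1)) - v (p i)) * Ψ (v (p i)) (p i))|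
          ≤ 1/2 * (ε * (v (p (i+1)) - v (p i))) := by
        rw [abs_mul, abs_of_nonneg (by norm_num : (0:ℝ) ≤ 1/2)]
        exact mul_le_mul_of_nonneg_left hE2b (by norm_num)
      linarith [hE2a, h3]
    rw [hsplit]
    refine le_trans (abs_add_le _ _)
      (le_trans (add_le_add hE1 habs) (le_of_eq (by ring)))
  -- final assembly
  have hDsum : Φ (v t) t - Φ (v s) s
      - ((∫ u in s..t, Θ (v u) u) + 1 / 2 * ∫ u in Set.Ioc s t, Ψ (v u) u ∂μ)
      = ∑ i ∈ Finset.range n, (Φ (v (p (i+1))) (p (i+1)) - Φ (v (p i)) (p i)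
        - ((∫ u in p i..p (i+1), Θ (v u) u)
           + 1 / 2 * ∫ u in Set.Ioc (p i) (p (i+1)), Ψ (v u) u ∂μ)) := by
    rw [hGsum, hΘsum, hΨsum, Finset.mul_sum, ← Finset.sum_add_distrib,
      ← Finset.sum_sub_distrib]
  rw [hDsum]
  calc |∑ i ∈ Finset.range n, (Φ (v (p (i+1))) (p (i+1)) - Φ (v (p i)) (p i)
        - ((∫ u in p i..p (i+1), Θ (v u) u)
           + 1 / 2 * ∫ u in Set.Ioc (p i) (p (i+1)), Ψ (v u) u ∂μ))|
      ≤ ∑ i ∈ Finset.range n, |Φ (v (p (i+1))) (p (i+1)) - Φ (v (p i)) (p i)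
        - ((∫ u in p i..p (i+1), Θ (v u) u)
           + 1 / 2 * ∫ u in Set.Ioc (p i) (p (i+1)), Ψ (v u) u ∂μ)| :=
        Finset.abs_sum_le_sum_abs _ _
    _ ≤ ∑ i ∈ Finset.range n, (ε * (p (i+1) - p i) + ε * (v (p (i+1)) - v (p i))) :=
        Finset.sum_le_sum hkey
    _ = ε * ((t - s) + (v t - v s)) := by
        rw [Finset.sum_add_distrib, ← Finset.mul_sum, ← Finset.mul_sum,
          Finset.sum_range_sub (fun i => p i),
          Finset.sum_range_sub (fun i => v (p i)), hp0, hpn]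
        ring
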